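/- Suppose ε : ℕ → ℕ → {0,1} assigns to each integer j ≥ 0 its q-representation, i.e., for every j ≥ 0 one has j = Σ_{i≥0} ε(j)(i)·a_i with all but finitely many ε(j)(i) zero and ε(j)(i) + ε(j)(i+1) + ⋯ + ε(j)(i+q−1) ≤ 1 for all i ≥ 0. Let s(j) := Σ_{i≥0} ε(j)(i) be the number of summands of j, and let S_A(N) := Σ_{j=0}^{N−1} s(j). Then for every n ≥ 0, S_A(G_{n+q−1}) = Σ_{k=0}^{⌊n/q⌋} k·C(n − k(q−1), k), where C(m, k) denotes the binomial coefficient. -/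

import Mathlib

set_option linter.unusedSectionVars false
namespace Nara

/-- window condition -/
def W (q : ℕ) (e : ℕ → ℕ) : Prop := ∀ i, ∑ t ∈ Finset.range q, e (i + t) ≤ 1

/-- value of a digit string (digits below `M`) -/
def val (a e : ℕ → ℕ) (M : ℕ) : ℕ := ∑ i ∈ Finset.range M, e i * a i

variable {q : ℕ} {a e f : ℕ → ℕ}

lemma W.le_one (hq : 1 ≤ q) (he : W q e) (i : ℕ) : e i ≤ 1 := by
  have h := he i
  have : e (i + 0) ≤ ∑ t ∈ Finset.range q, e (i + t) :=
    Finset.single_le_sum (f := fun t => e (i + t)) (fun _ _ => Nat.zero_le _)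
      (Finset.mem_range.mpr hq)
  simpa using this.trans h

lemma W.zero_between (hq : 1 ≤ q) (he : W q e) {i m : ℕ} (him : i < m) (hqm : m + 1 ≤ i + q)
    (hm : e m = 1) : e i = 0 := by
  have h := he i
  have h1 : e (i + 0) + e (i + (m - i)) ≤ ∑ t ∈ Finset.range q, e (i + t) := by
    have : ({0, m - i} : Finset ℕ) ⊆ Finset.range q := by
      intro t ht
      simp only [Finset.mem_insert, Finset.mem_singleton] at ht
      rcases ht with rfl | rfl
      · exact Finset.mem_range.mpr hq
      · exact Finset.mem_range.mpr (by omega)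
    calc e (i + 0) + e (i + (m - i)) = ∑ t ∈ ({0, m - i} : Finset ℕ), e (i + t) := by
          rw [Finset.sum_pair (by omega)]
      _ ≤ _ := Finset.sum_le_sum_of_subset this
  have h2 : i + (m - i) = m := by omega
  rw [h2, Nat.add_zero] at h1
  have := h1.trans h
  omega

section
variable (hq : 1 ≤ q) (ha0 : a 0 = 1) (harec : ∀ t, a (t + 1) = a t + a (t + 1 - q))
include hq ha0 harec

lemma apos : ∀ m, 1 ≤ a m := by
  intro m
  induction m with
  | zero => omega
  | succ t ih => rw [harec t]; omega

lemma amono : StrictMono a := by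
  have h1 : ∀ t, a t < a (t + 1) := by
    intro t
    have := apos hq ha0 harec (t + 1 - q)
    rw [harec t]; omega
  exact strictMono_nat_of_lt_succ h1

/-- maximality: a valid string with digits below `M` has value `< a M`. -/
lemma val_lt (he : W q e) : ∀ M, val a e M < a M := by
  intro M
  induction M using Nat.strong_induction_on with
  | _ M ih =>
    match M with
    | 0 => simpa [val] using Nat.lt_of_lt_of_le Nat.zero_lt_one (apos hq ha0 harec 0)
    | M + 1 =>
      have heM := he.le_one hq M
      rcases Nat.le_one_iff_eq_zero_or_eq_one.mp heM with h0 | h1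
      · have : val a e (M + 1) = val a e M := by
          rw [val, Finset.sum_range_succ, h0]; simp [val]
        rw [this]
        exact lt_of_lt_of_le (ih M (by omega)) ((amono hq ha0 harec).monotone (by omega))
      · -- e M = 1 ; digits in (M-q, M) vanish
        have hzero : ∀ i, M + 1 - q ≤ i → i < M → e i = 0 := by
          intro i h1i h2i
          exact he.zero_between hq h2i (by omega) h1
        have hval : val a e (M + 1) = a M + val a e (M + 1 - q) := by
          have hsplit : val a e (M + 1) = val a e M + a M := by
            rw [val, Finset.sum_range_succ, h1, one_mul]; rfl
          have : val a e M = val a e (M + 1 - q) := by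
            have hle : M + 1 - q ≤ M := by omega
            rw [val, ← Finset.sum_range_add_sum_Ico _ hle]
            have : ∑ i ∈ Finset.Ico (M + 1 - q) M, e i * a i = 0 := by
              apply Finset.sum_eq_zero
              intro i hi
              rw [Finset.mem_Ico] at hi
              rw [hzero i hi.1 hi.2, zero_mul]
            rw [this, add_zero]; rfl
          omega
        rw [hval, harec M]
        have := ih (M + 1 - q) (by omega)
        omega


lemma a_unbounded : ∀ t, t + 1 ≤ a t := by
  intro t
  induction t with
  | zero => omega
  | succ t ih =>
    have h := harec t
    have := apos hq ha0 harec (t + 1 - q)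
    omega

lemma exists_top {v : ℕ} (hv : 1 ≤ v) : ∃ m, a m ≤ v ∧ v < a (m + 1) := by
  have hub : ∃ t, v < a t := ⟨v + 1, by have := a_unbounded hq ha0 harec (v + 1); omega⟩
  classical
  have hfind := Nat.find_spec hub
  have ht0pos : 1 ≤ Nat.find hub := by
    rcases Nat.eq_zero_or_pos (Nat.find hub) with h | h
    · rw [h] at hfind; omega
    · exact h
  refine ⟨Nat.find hub - 1, ?_, ?_⟩
  · have := Nat.find_min hub (m := Nat.find hub - 1) (by omega)
    omega
  · have : Nat.find hub - 1 + 1 = Nat.find hub := by omega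
    rw [this]
    exact hfind

omit hq ha0 harec in
lemma val_drop {e : ℕ → ℕ} {K M : ℕ} (hKM : K ≤ M)
    (h : ∀ i, K ≤ i → i < M → e i = 0) : val a e M = val a e K := by
  rw [val, ← Finset.sum_range_add_sum_Ico _ hKM]
  have : ∑ i ∈ Finset.Ico K M, e i * a i = 0 := by
    apply Finset.sum_eq_zero
    intro i hi
    rw [Finset.mem_Ico] at hi
    rw [h i hi.1 hi.2, zero_mul]
  rw [this, add_zero]; rfl

omit hq ha0 harec in
lemma le_val {e : ℕ → ℕ} {M i : ℕ} (hi : i < M) (hei : e i = 1) : a i ≤ val a e M := by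
  have : e i * a i ≤ val a e M :=
    Finset.single_le_sum (f := fun i => e i * a i) (fun _ _ => Nat.zero_le _)
      (Finset.mem_range.mpr hi)
  rw [hei, one_mul] at this
  exact this

lemma top_decomp (he : W q e) {M m : ℕ} (hM : ∀ i, M ≤ i → e i = 0)
    (h1 : a m ≤ val a e M) (h2 : val a e M < a (m + 1)) :
    e m = 1 ∧ (∀ i, m < i → e i = 0) ∧ (∀ i, m + 1 - q ≤ i → i < m → e i = 0) ∧
      val a e M = a m + val a e (m + 1 - q) := by
  have habove : ∀ i, m < i → e i = 0 := by
    intro i hi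
    by_cases hiM : M ≤ i
    · exact hM i hiM
    · rcases Nat.le_one_iff_eq_zero_or_eq_one.mp (he.le_one hq i) with h0 | hh1
      · exact h0
      · exfalso
        have := le_val (a := a) (by omega : i < M) hh1
        have := (amono hq ha0 harec).monotone (show m + 1 ≤ i by omega)
        omega
  have hem : e m = 1 := by
    rcases Nat.le_one_iff_eq_zero_or_eq_one.mp (he.le_one hq m) with h0 | hh1
    · exfalso
      by_cases hmM : m ≤ M
      · have : val a e M = val a e m := by
          apply val_drop hmM
          intro i hi1 hi2
          rcases Nat.eq_or_lt_of_le hi1 with rfl | hlt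
          · exact h0
          · exact habove i hlt
        rw [this] at h1
        have := val_lt hq ha0 harec he m
        omega
      · have : val a e m = val a e M := by
          apply val_drop (by omega)
          intro i hi1 hi2
          exact hM i hi1
        rw [← this] at h1
        have := val_lt hq ha0 harec he m
        omega
    · exact hh1
  have hbetween : ∀ i, m + 1 - q ≤ i → i < m → e i = 0 := by
    intro i hi1 hi2
    exact he.zero_between hq hi2 (by omega) hem
  refine ⟨hem, habove, hbetween, ?_⟩
  have hmM : m < M := by
    by_contra h
    have := hM m (by omega)
    omega
  have step1 : val a e M = val a e (m + 1) := by
    apply val_drop (by omega)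
    intro i hi1 hi2
    exact habove i (by omega)
  have step2 : val a e (m + 1) = val a e m + a m := by
    rw [val, Finset.sum_range_succ, hem, one_mul]; rfl
  have step3 : val a e m = val a e (m + 1 - q) := by
    apply val_drop (by omega)
    intro i hi1 hi2
    exact hbetween i hi1 hi2
  omega

lemma val_unique : ∀ v : ℕ, ∀ e f : ℕ → ℕ, ∀ M N : ℕ, W q e → W q f →
    (∀ i, M ≤ i → e i = 0) → (∀ i, N ≤ i → f i = 0) →
    val a e M = v → val a f N = v → ∀ i, e i = f i := by
  intro v
  induction v using Nat.strong_induction_on with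
  | _ v ih =>
    intro e f M N he hf hM hN hve hvf i
    match v, hve, hvf with
    | 0, hve, hvf =>
      have hz : ∀ (g : ℕ → ℕ) (K : ℕ), W q g → val a g K = 0 → (∀ j, K ≤ j → g j = 0) →
          g i = 0 := by
        intro g K hg hval hK
        by_cases hiK : K ≤ i
        · exact hK i hiK
        · rcases Nat.le_one_iff_eq_zero_or_eq_one.mp (hg.le_one hq i) with h0 | h1
          · exact h0
          · exfalso
            have := le_val (a := a) (by omega : i < K) h1
            have := apos hq ha0 harec i
            omega
      rw [hz e M he hve hM, hz f N hf hvf hN]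
    | (v + 1), hve, hvf =>
      obtain ⟨m, hm1, hm2⟩ := exists_top hq ha0 harec (v := v + 1) (by omega)
      obtain ⟨he1, he2, he3, he4⟩ := top_decomp hq ha0 harec he hM (hve ▸ hm1) (hve ▸ hm2)
      obtain ⟨hf1, hf2, hf3, hf4⟩ := top_decomp hq ha0 harec hf hN (hvf ▸ hm1) (hvf ▸ hm2)
      set e' : ℕ → ℕ := fun i => if i < m + 1 - q then e i else 0 with he'
      set f' : ℕ → ℕ := fun i => if i < m + 1 - q then f i else 0 with hf'
      have hWe' : W q e' := by
        intro j
        refine le_trans (Finset.sum_le_sum ?_) (he j)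
        intro t _
        simp only [he']
        split <;> omega
      have hWf' : W q f' := by
        intro j
        refine le_trans (Finset.sum_le_sum ?_) (hf j)
        intro t _
        simp only [hf']
        split <;> omega
      have hM' : ∀ j, m + 1 - q ≤ j → e' j = 0 := by
        intro j hj; simp only [he']; split <;> omega
      have hN' : ∀ j, m + 1 - q ≤ j → f' j = 0 := by
        intro j hj; simp only [hf']; split <;> omega
      have hvale' : val a e' (m + 1 - q) = v + 1 - a m := by
        have : val a e' (m + 1 - q) = val a e (m + 1 - q) := by
          apply Finset.sum_congr rfl
          intro j hj
          rw [Finset.mem_range] at hj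
          simp only [he', if_pos hj]
        omega
      have hvalf' : val a f' (m + 1 - q) = v + 1 - a m := by
        have : val a f' (m + 1 - q) = val a f (m + 1 - q) := by
          apply Finset.sum_congr rfl
          intro j hj
          rw [Finset.mem_range] at hj
          simp only [hf', if_pos hj]
        omega
      have ham : 1 ≤ a m := apos hq ha0 harec m
      have heq' := ih (v + 1 - a m) (by omega) e' f' (m + 1 - q) (m + 1 - q)
        hWe' hWf' hM' hN' hvale' hvalf'
      by_cases hc1 : i < m + 1 - q
      · have := heq' i
        simpa only [he', hf', if_pos hc1] using this
      · by_cases hc2 : i < m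
        · rw [he3 i (by omega) hc2, hf3 i (by omega) hc2]
        · by_cases hc3 : i = m
          · rw [hc3, he1, hf1]
          · rw [he2 i (by omega), hf2 i (by omega)]

end

end Nara


namespace Nara

lemma dsum_drop {g : ℕ → ℕ} {K M : ℕ} (hKM : K ≤ M)
    (h : ∀ i, K ≤ i → i < M → g i = 0) :
    ∑ i ∈ Finset.range M, g i = ∑ i ∈ Finset.range K, g i := by
  rw [← Finset.sum_range_add_sum_Ico _ hKM]
  have : ∑ i ∈ Finset.Ico K M, g i = 0 := by
    apply Finset.sum_eq_zero
    intro i hi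
    rw [Finset.mem_Ico] at hi
    exact h i hi.1 hi.2
  rw [this, add_zero]

lemma dsum_ext {g : ℕ → ℕ} {K M : ℕ} (hM : ∀ i, M ≤ i → g i = 0)
    (hK : ∀ i, K ≤ i → g i = 0) :
    ∑ i ∈ Finset.range M, g i = ∑ i ∈ Finset.range K, g i := by
  rcases le_total K M with h | h
  · exact dsum_drop h (fun i hi _ => hK i hi)
  · exact (dsum_drop h (fun i hi _ => hM i hi)).symm

end Nara


namespace Nara2

def A (q n : ℕ) : ℕ := ∑ k ∈ Finset.range (n / q + 1), Nat.choose (n - k * (q - 1)) k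
def T (q n : ℕ) : ℕ := ∑ k ∈ Finset.range (n / q + 1), k * Nat.choose (n - k * (q - 1)) k

variable {q n : ℕ}

lemma term_zero (hq : 1 ≤ q) {k : ℕ} (h : n / q < k) : Nat.choose (n - k * (q - 1)) k = 0 := by
  obtain ⟨p, rfl⟩ : ∃ p, q = p + 1 := ⟨q - 1, by omega⟩
  simp only [Nat.add_sub_cancel]
  have hn : n < k * (p + 1) := (Nat.div_lt_iff_lt_mul (by omega)).mp h
  have hk : k * (p + 1) = k * p + k := by ring
  have hk1 : 1 ≤ k := by
    rcases Nat.eq_zero_or_pos k with rfl | hpos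
    · exact absurd h (Nat.not_lt_zero _)
    · exact hpos
  have hn2 : n < k * p + k := by omega
  apply Nat.choose_eq_zero_of_lt
  omega

lemma A_eq (hq : 1 ≤ q) {B : ℕ} (hB : n / q + 1 ≤ B) :
    A q n = ∑ k ∈ Finset.range B, Nat.choose (n - k * (q - 1)) k := by
  apply Finset.sum_subset
  · intro k hk
    rw [Finset.mem_range] at *
    omega
  · intro k hk hk'
    rw [Finset.mem_range] at *
    exact term_zero hq (by omega)

lemma T_eq (hq : 1 ≤ q) {B : ℕ} (hB : n / q + 1 ≤ B) :
    T q n = ∑ k ∈ Finset.range B, k * Nat.choose (n - k * (q - 1)) k := by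
  apply Finset.sum_subset
  · intro k hk
    rw [Finset.mem_range] at *
    omega
  · intro k hk hk'
    rw [Finset.mem_range] at *
    rw [term_zero hq (by omega), mul_zero]

lemma A_small (hq : 1 ≤ q) (h : n < q) : A q n = 1 := by
  have h0 : n / q = 0 := Nat.div_eq_of_lt h
  simp [A, h0]

lemma T_small (hq : 1 ≤ q) (h : n < q) : T q n = 0 := by
  have h0 : n / q = 0 := Nat.div_eq_of_lt h
  simp [T, h0]

/-- the pointwise Pascal-type identity -/
lemma pascal_point (hq : 1 ≤ q) (hn : q ≤ n) {k : ℕ} (hk : 1 ≤ k) :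
    Nat.choose (n - k * (q - 1)) k
      = Nat.choose (n - 1 - k * (q - 1)) k + Nat.choose (n - q - (k - 1) * (q - 1)) (k - 1) := by
  obtain ⟨p, rfl⟩ : ∃ p, q = p + 1 := ⟨q - 1, by omega⟩
  simp only [Nat.add_sub_cancel]
  obtain ⟨l, rfl⟩ : ∃ l, k = l + 1 := ⟨k - 1, by omega⟩
  simp only [Nat.add_sub_cancel]
  have hkp : (l + 1) * p = l * p + p := by ring
  by_cases hc : (l + 1) * p + 1 ≤ n
  · have e1 : n - (l + 1) * p = (n - 1 - (l + 1) * p) + 1 := by omega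
    have e2 : n - (p + 1) - l * p = n - 1 - (l + 1) * p := by omega
    rw [e1, e2, Nat.choose_succ_succ']
    omega
  · -- n ≤ (l+1) p : all three choose terms vanish
    have h1 : n - (l + 1) * p = 0 := by omega
    have h2 : n - 1 - (l + 1) * p = 0 := by omega
    have hl : 1 ≤ l := by
      by_contra h
      have : l = 0 := by omega
      subst this
      omega
    have h3 : n - (p + 1) - l * p = 0 := by omega
    obtain ⟨l2, rfl⟩ : ∃ l2, l = l2 + 1 := ⟨l - 1, by omega⟩
    rw [h1, h2, h3]
    simp

lemma A_rec (hq : 1 ≤ q) (hn : q ≤ n) : A q n = A q (n - 1) + A q (n - q) := by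
  have hn1 : 1 ≤ n := le_trans hq hn
  have hA : A q n = ∑ k ∈ Finset.range (n + 1), Nat.choose (n - k * (q - 1)) k :=
    A_eq hq (by have := Nat.div_le_self n q; omega)
  have hA1 : A q (n - 1) = ∑ k ∈ Finset.range (n + 1), Nat.choose (n - 1 - k * (q - 1)) k :=
    A_eq hq (by have := Nat.div_le_self (n - 1) q; omega)
  have hA2 : A q (n - q) = ∑ k ∈ Finset.range n, Nat.choose (n - q - k * (q - 1)) k :=
    A_eq hq (by have := Nat.div_le_self (n - q) q; omega)
  rw [hA, hA1, hA2]
  rw [Finset.sum_range_succ' (fun k => Nat.choose (n - k * (q - 1)) k) n]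
  rw [Finset.sum_range_succ' (fun k => Nat.choose (n - 1 - k * (q - 1)) k) n]
  simp only [Nat.zero_mul, Nat.sub_zero, Nat.choose_zero_right]
  have hpt : ∀ k ∈ Finset.range n, Nat.choose (n - (k + 1) * (q - 1)) (k + 1)
      = Nat.choose (n - 1 - (k + 1) * (q - 1)) (k + 1) + Nat.choose (n - q - k * (q - 1)) k := by
    intro k hk
    have := pascal_point hq hn (k := k + 1) (by omega)
    simpa using this
  rw [Finset.sum_congr rfl hpt, Finset.sum_add_distrib]
  ring

lemma T_rec (hq : 1 ≤ q) (hn : q ≤ n) : T q n = T q (n - 1) + T q (n - q) + A q (n - q) := by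
  have hn1 : 1 ≤ n := le_trans hq hn
  have hT : T q n = ∑ k ∈ Finset.range (n + 1), k * Nat.choose (n - k * (q - 1)) k :=
    T_eq hq (by have := Nat.div_le_self n q; omega)
  have hT1 : T q (n - 1) = ∑ k ∈ Finset.range (n + 1), k * Nat.choose (n - 1 - k * (q - 1)) k :=
    T_eq hq (by have := Nat.div_le_self (n - 1) q; omega)
  have hT2 : T q (n - q) = ∑ k ∈ Finset.range n, k * Nat.choose (n - q - k * (q - 1)) k :=
    T_eq hq (by have := Nat.div_le_self (n - q) q; omega)
  have hA2 : A q (n - q) = ∑ k ∈ Finset.range n, Nat.choose (n - q - k * (q - 1)) k :=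
    A_eq hq (by have := Nat.div_le_self (n - q) q; omega)
  rw [hT, hT1, hT2, hA2]
  rw [Finset.sum_range_succ' (fun k => k * Nat.choose (n - k * (q - 1)) k) n]
  rw [Finset.sum_range_succ' (fun k => k * Nat.choose (n - 1 - k * (q - 1)) k) n]
  simp only [Nat.zero_mul, Nat.sub_zero, Nat.mul_zero]
  have hpt : ∀ k ∈ Finset.range n, (k + 1) * Nat.choose (n - (k + 1) * (q - 1)) (k + 1)
      = (k + 1) * Nat.choose (n - 1 - (k + 1) * (q - 1)) (k + 1)
        + (k * Nat.choose (n - q - k * (q - 1)) k + Nat.choose (n - q - k * (q - 1)) k) := by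
    intro k hk
    have hp := pascal_point hq hn (k := k + 1) (by omega)
    simp only [Nat.add_sub_cancel] at hp
    rw [hp]
    ring
  rw [Finset.sum_congr rfl hpt, Finset.sum_add_distrib, Finset.sum_add_distrib]
  ring

end Nara2




/-- Fix `q ≥ 1`, let `G` be the fundamental recurrence attached to
`x^q − x^{q−1} − 1`, and set `a_i = G_{2q−2+i}`.  Suppose `ε` assigns to every `j ≥ 0` its
`q`-representation.  With `s(j) = Σᶠ i, ε j i` and `S_A(N) = Σ_{j<N} s(j)`, we have, for
every `n ≥ 0`, `S_A(G_{n+q−1}) = Σ_{k=0}^{⌊n/q⌋} k·C(n − k(q−1), k)`. -/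
theorem narayana_cumulative_digit_sum_binomial
    (q : ℕ) (hq : 1 ≤ q) (G : ℕ → ℕ)
    (hG0 : ∀ k, k < q - 1 → G k = 0)
    (hG1 : G (q - 1) = 1)
    (hGrec : ∀ k, G (k + q) = G (k + q - 1) + G k)
    (ε : ℕ → ℕ → ℕ)
    (hfin : ∀ j, (Function.support (ε j)).Finite)
    (hdig : ∀ j i, ε j i ≤ 1)
    (hwin : ∀ j i, ∑ t ∈ Finset.range q, ε j (i + t) ≤ 1)
    (hrep : ∀ j, j = ∑ᶠ i, ε j i * G (2 * q - 2 + i))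
    (n : ℕ) :
    ∑ j ∈ Finset.range (G (n + q - 1)), (∑ᶠ i, ε j i)
      = ∑ k ∈ Finset.range (n / q + 1), k * Nat.choose (n - k * (q - 1)) k := by
  classical
  set a : ℕ → ℕ := fun i => G (2 * q - 2 + i) with ha
  -- the stretch of ones
  have stretch : ∀ t, t ≤ q - 1 → G (q - 1 + t) = 1 := by
    intro t
    induction t with
    | zero => intro _; simpa using hG1
    | succ t ih =>
      intro ht
      have h1 := hGrec t
      have h2 : t + q = q - 1 + (t + 1) := by omega
      have h3 : t + q - 1 = q - 1 + t := by omega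
      rw [h3, h2] at h1
      rw [h1, ih (by omega), hG0 t (by omega)]
  have ha0 : a 0 = 1 := by
    show G (2 * q - 2 + 0) = 1
    have h : 2 * q - 2 + 0 = q - 1 + (q - 1) := by omega
    rw [h]
    exact stretch (q - 1) le_rfl
  have harec : ∀ t, a (t + 1) = a t + a (t + 1 - q) := by
    intro t
    show G (2 * q - 2 + (t + 1)) = G (2 * q - 2 + t) + a (t + 1 - q)
    have h1 := hGrec (q - 1 + t)
    have h2 : q - 1 + t + q = 2 * q - 2 + (t + 1) := by omega
    have h3 : q - 1 + t + q - 1 = 2 * q - 2 + t := by omega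
    rw [h3, h2] at h1
    rw [h1]
    congr 1
    by_cases hc : q ≤ t + 1
    · show G (q - 1 + t) = G (2 * q - 2 + (t + 1 - q))
      congr 1
      omega
    · have h4 : t + 1 - q = 0 := by omega
      rw [h4, ha0]
      exact stretch t (by omega)
  have hW : ∀ j, Nara.W q (ε j) := hwin
  -- support bounds
  set M : ℕ → ℕ := fun j => (hfin j).toFinset.sup id + 1 with hMdef
  have hMz : ∀ j i, M j ≤ i → ε j i = 0 := by
    intro j i hi
    by_contra h
    have h1 : i ∈ (hfin j).toFinset := (hfin j).mem_toFinset.mpr h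
    have h2 := Finset.le_sup (f := id) h1
    simp only [id] at h2
    simp only [hMdef] at hi
    omega
  have hval : ∀ j, Nara.val a (ε j) (M j) = j := by
    intro j
    have h1 := hrep j
    have h2 : ∑ᶠ i, ε j i * G (2 * q - 2 + i) = ∑ i ∈ Finset.range (M j), ε j i * a i := by
      apply finsum_eq_sum_of_support_subset
      intro i hi
      simp only [Function.mem_support] at hi
      have h3 : ε j i ≠ 0 := by
        intro h4
        rw [h4, zero_mul] at hi
        exact hi rfl
      have hlt : i < M j := by
        by_contra hc
        exact h3 (hMz j i (by omega))
      simpa using hlt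
    rw [h2] at h1
    exact h1.symm
  have hsdig : ∀ j, (∑ᶠ i, ε j i) = ∑ i ∈ Finset.range (M j), ε j i := by
    intro j
    apply finsum_eq_sum_of_support_subset
    intro i hi
    simp only [Function.mem_support] at hi
    have hlt : i < M j := by
      by_contra hc
      exact hi (hMz j i (by omega))
    simpa using hlt
  -- key step: digit sum of a m + j'
  have hkey : ∀ m j', j' < a (m + 1 - q) →
      (∑ᶠ i, ε (a m + j') i) = 1 + ∑ᶠ i, ε j' i := by
    intro m j' hj'
    set j := a m + j' with hj
    have h1 : a m ≤ Nara.val a (ε j) (M j) := by rw [hval]; omega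
    have h2 : Nara.val a (ε j) (M j) < a (m + 1) := by rw [hval, harec m]; omega
    obtain ⟨htop, habove, hbet, hdec⟩ :=
      Nara.top_decomp hq ha0 harec (hW j) (hMz j) h1 h2
    have hv' : Nara.val a (ε j) (m + 1 - q) = j' := by
      rw [hval] at hdec
      have := Nara.apos hq ha0 harec m
      omega
    set e' : ℕ → ℕ := fun i => if i < m + 1 - q then ε j i else 0 with he'
    have hWe' : Nara.W q e' := by
      intro i
      refine le_trans (Finset.sum_le_sum ?_) (hW j i)
      intro t _
      simp only [he']
      split
      · exact le_rfl
      · exact Nat.zero_le _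
    have hN' : ∀ i, m + 1 - q ≤ i → e' i = 0 := by
      intro i hi
      simp only [he']
      split
      · omega
      · rfl
    have hve' : Nara.val a e' (m + 1 - q) = j' := by
      rw [← hv']
      apply Finset.sum_congr rfl
      intro i hi
      rw [Finset.mem_range] at hi
      simp only [he', if_pos hi]
    have heq := Nara.val_unique hq ha0 harec j' e' (ε j') (m + 1 - q) (M j')
      hWe' (hW j') hN' (hMz j') hve' (hval j')
    have hz2 : ∀ i, m + 1 - q ≤ i → ε j' i = 0 := by
      intro i hi
      rw [← heq i]
      exact hN' i hi
    have hs1 : (∑ᶠ i, ε j' i) = ∑ i ∈ Finset.range (m + 1 - q), ε j i := by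
      rw [hsdig j', Nara.dsum_ext (hMz j') hz2]
      apply Finset.sum_congr rfl
      intro i hi
      rw [Finset.mem_range] at hi
      rw [← heq i]
      simp only [he', if_pos hi]
    have hs2 : (∑ᶠ i, ε j i) = 1 + ∑ i ∈ Finset.range (m + 1 - q), ε j i := by
      rw [hsdig j, Nara.dsum_ext (K := m + 1) (hMz j) (fun i hi => habove i (by omega)),
        Finset.sum_range_succ, htop, Nara.dsum_drop (by omega) hbet]
      omega
    rw [hs2, hs1]
  -- the zero case
  have hsdig0 : (∑ᶠ i, ε 0 i) = 0 := by
    rw [hsdig 0]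
    apply Finset.sum_eq_zero
    intro i hi
    rw [Finset.mem_range] at hi
    rcases Nat.le_one_iff_eq_zero_or_eq_one.mp (hdig 0 i) with h0 | h1
    · exact h0
    · exfalso
      have h2 := Nara.le_val (a := a) hi h1
      rw [hval 0] at h2
      have := Nara.apos hq ha0 harec i
      omega
  -- the cumulative sum recurrence
  have hSA : ∀ m, ∑ j ∈ Finset.range (a (m + 1)), (∑ᶠ i, ε j i)
      = (∑ j ∈ Finset.range (a m), (∑ᶠ i, ε j i)) + a (m + 1 - q)
        + ∑ j ∈ Finset.range (a (m + 1 - q)), (∑ᶠ i, ε j i) := by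
    intro m
    rw [harec m, Finset.sum_range_add]
    have h1 : ∀ j' ∈ Finset.range (a (m + 1 - q)),
        (∑ᶠ i, ε (a m + j') i) = 1 + ∑ᶠ i, ε j' i := by
      intro j' hj'
      rw [Finset.mem_range] at hj'
      exact hkey m j' hj'
    have h2 : ∑ x ∈ Finset.range (a (m + 1 - q)), (∑ᶠ i, ε (a m + x) i)
        = a (m + 1 - q) + ∑ j' ∈ Finset.range (a (m + 1 - q)), (∑ᶠ i, ε j' i) := by
      rw [Finset.sum_congr rfl h1, Finset.sum_add_distrib, Finset.sum_const,
        Finset.card_range, smul_eq_mul, mul_one]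
    rw [h2]
    omega
  -- a in terms of A
  have haA : ∀ n, a (n - (q - 1)) = Nara2.A q n := by
    intro n
    induction n using Nat.strong_induction_on with
    | _ n ih =>
      by_cases hc : n < q
      · rw [show n - (q - 1) = 0 from by omega, ha0, Nara2.A_small hq hc]
      · rw [show n - (q - 1) = (n - q) + 1 from by omega, harec (n - q),
          show n - q + 1 - q = n - q - (q - 1) from by omega]
        have i1 : a (n - q) = Nara2.A q (n - 1) := by
          rw [show n - q = (n - 1) - (q - 1) from by omega]
          exact ih (n - 1) (by omega)
        have i2 : a (n - q - (q - 1)) = Nara2.A q (n - q) := ih (n - q) (by omega)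
        rw [i1, i2]
        exact (Nara2.A_rec (n := n) hq (by omega)).symm
  -- the main induction
  have main : ∀ n, ∑ j ∈ Finset.range (a (n - (q - 1))), (∑ᶠ i, ε j i) = Nara2.T q n := by
    intro n
    induction n using Nat.strong_induction_on with
    | _ n ih =>
      by_cases hc : n < q
      · rw [show n - (q - 1) = 0 from by omega, ha0, Finset.sum_range_one, hsdig0,
          Nara2.T_small hq hc]
      · rw [show n - (q - 1) = (n - q) + 1 from by omega, hSA (n - q),
          show n - q + 1 - q = n - q - (q - 1) from by omega]
        have i1 : ∑ j ∈ Finset.range (a (n - q)), (∑ᶠ i, ε j i) = Nara2.T q (n - 1) := by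
          rw [show n - q = (n - 1) - (q - 1) from by omega]
          exact ih (n - 1) (by omega)
        have i2 : ∑ j ∈ Finset.range (a (n - q - (q - 1))), (∑ᶠ i, ε j i)
            = Nara2.T q (n - q) := ih (n - q) (by omega)
        have i3 : a (n - q - (q - 1)) = Nara2.A q (n - q) := haA (n - q)
        rw [i1, i2, i3]
        have hT := Nara2.T_rec (n := n) hq (by omega)
        omega
  -- conclude
  have hGa : G (n + q - 1) = a (n - (q - 1)) := by
    by_cases hc : q - 1 ≤ n
    · show _ = G (2 * q - 2 + (n - (q - 1)))
      congr 1
      omega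
    · rw [show n - (q - 1) = 0 from by omega, ha0,
        show n + q - 1 = q - 1 + n from by omega]
      exact stretch n (by omega)
  rw [hGa, main n]
  rfl
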